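/- arXiv:2605.26452 — 4 statements merged into one kernel-verified Lean document; each statement's English description precedes it below -/
import Mathlib

section
/- Fix n_z, n_u, J ∈ ℕ, a matrix A ∈ ℝ^{n_z × n_z}, a matrix B ∈ ℝ^{n_z × n_u}, and for each j ∈ Fin J a vector c_j ∈ ℝ^{n_z}, a scalar d_j ∈ ℝ, a decay parameter η_j ∈ (0,1], and a margin ρ_j ≥ 0. Let z : ℕ → ℝ^{n_z}, u : ℕ → ℝ^{n_u}, r : ℕ → ℝ^{n_z} satisfy z_{t+1} = A·z_t + B·u_t + r_t for all t. Assume residual coverage: for all t and all j, |⟪c_j, r_t⟫| ≤ ρ_j. Assume the robust condition: for all t and all j, ⟪c_j, A·z_t + B·u_t⟫ + d_j ≥ (1 − η_j)·(⟪c_j, z_t⟫ + d_j) + ρ_j. If ⟪c_j, z_0⟫ + d_j ≥ 0 for all j, then ⟪c_j, z_t⟫ + d_j ≥ 0 for all t ∈ ℕ and all j. -/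
open Matrix

/-- Robust Koopman-CBF forward invariance: under residual coverage
`|⟪c j, r t⟫| ≤ ρ j` and the robust lifted CBF condition, the lifted safe set
`{z : ⟪c j, z⟫ + d j ≥ 0 for all j}` is forward invariant for the lifted
dynamics `z (t+1) = A z t + B u t + r t`. -/
theorem robust_koopman_cbf_forward_invariance
    (nz nu J : ℕ)
    (A : Matrix (Fin nz) (Fin nz) ℝ) (B : Matrix (Fin nz) (Fin nu) ℝ)
    (c : Fin J → Fin nz → ℝ) (d : Fin J → ℝ) (η : Fin J → ℝ) (ρ : Fin J → ℝ)
    (hη : ∀ j, η j ∈ Set.Ioc (0 : ℝ) 1) (hρ : ∀ j, 0 ≤ ρ j)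
    (z : ℕ → Fin nz → ℝ) (u : ℕ → Fin nu → ℝ) (r : ℕ → Fin nz → ℝ)
    (hdyn : ∀ t : ℕ, z (t + 1) = A.mulVec (z t) + B.mulVec (u t) + r t)
    (hres : ∀ t : ℕ, ∀ j : Fin J, |c j ⬝ᵥ r t| ≤ ρ j)
    (hrob : ∀ t : ℕ, ∀ j : Fin J,
      c j ⬝ᵥ (A.mulVec (z t) + B.mulVec (u t)) + d j ≥
        (1 - η j) * (c j ⬝ᵥ z t + d j) + ρ j)
    (h0 : ∀ j : Fin J, c j ⬝ᵥ z 0 + d j ≥ 0) :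
    ∀ t : ℕ, ∀ j : Fin J, c j ⬝ᵥ z t + d j ≥ 0 := by
  intro t
  induction t with
  | zero => exact h0
  | succ t ih =>
    intro j
    have hsplit : c j ⬝ᵥ z (t + 1) =
        c j ⬝ᵥ (A.mulVec (z t) + B.mulVec (u t)) + c j ⬝ᵥ r t := by
      rw [hdyn t, dotProduct_add]
    have hr : -(ρ j) ≤ c j ⬝ᵥ r t := (abs_le.mp (hres t j)).1
    have h1 := hrob t j
    have hη1 : 1 - η j ≥ 0 := by linarith [(hη j).2]
    have hh : (1 - η j) * (c j ⬝ᵥ z t + d j) ≥ 0 :=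
      mul_nonneg hη1 (ih j)
    have : c j ⬝ᵥ z (t + 1) + d j =
        (c j ⬝ᵥ (A.mulVec (z t) + B.mulVec (u t)) + d j) + c j ⬝ᵥ r t := by
      rw [hsplit]; ring
    linarith
end

section
/- Fix n_z, n_u ∈ ℕ, matrices A ∈ ℝ^{n_z × n_z} and B ∈ ℝ^{n_z × n_u}, a vector c ∈ ℝ^{n_z}, scalars d ∈ ℝ, η ∈ (0,1], ρ ≥ 0, and points z ∈ ℝ^{n_z}, u ∈ ℝ^{n_u}, r ∈ ℝ^{n_z}. If (i) ⟪c, z⟫ + d ≥ 0, (ii) |⟪c, r⟫| ≤ ρ, and (iii) ⟪c, A·z + B·u⟫ + d ≥ (1 − η)·(⟪c, z⟫ + d) + ρ, then ⟪c, A·z + B·u + r⟫ + d ≥ (1 − η)·(⟪c, z⟫ + d) ≥ 0. -/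
open Matrix

/-- One-step robust Koopman-CBF guarantee: if `⟪c, z⟫ + d ≥ 0`, the projected
residual is covered (`|⟪c, r⟫| ≤ ρ`), and the robust lifted CBF condition
holds, then the true next barrier value satisfies
`⟪c, A z + B u + r⟫ + d ≥ (1 - η) (⟪c, z⟫ + d) ≥ 0`. -/
theorem robust_koopman_cbf_one_step
    (nz nu : ℕ)
    (A : Matrix (Fin nz) (Fin nz) ℝ) (B : Matrix (Fin nz) (Fin nu) ℝ)
    (c : Fin nz → ℝ) (d η ρ : ℝ)
    (hη : η ∈ Set.Ioc (0 : ℝ) 1) (hρ : 0 ≤ ρ)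
    (z : Fin nz → ℝ) (u : Fin nu → ℝ) (r : Fin nz → ℝ)
    (hsafe : c ⬝ᵥ z + d ≥ 0)
    (hres : |c ⬝ᵥ r| ≤ ρ)
    (hrob : c ⬝ᵥ (A.mulVec z + B.mulVec u) + d ≥ (1 - η) * (c ⬝ᵥ z + d) + ρ) :
    c ⬝ᵥ (A.mulVec z + B.mulVec u + r) + d ≥ (1 - η) * (c ⬝ᵥ z + d) ∧
      (1 - η) * (c ⬝ᵥ z + d) ≥ 0 := by
  have hr := abs_le.mp hres
  rw [dotProduct_add]
  constructor
  · linarith [hr.1]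
  · have h1 : (0:ℝ) ≤ 1 - η := by linarith [hη.2]
    exact mul_nonneg h1 hsafe
end

section
/- Let (Ω, P) be a probability space, n ∈ ℕ with n ≥ 1, and X : Fin (n+1) → Ω → ℝ a family of real random variables that is exchangeable, i.e., for every permutation σ of Fin (n+1), the joint law of the random vector (X_{σ(0)}, …, X_{σ(n)}) equals the joint law of (X_0, …, X_n). Fix α ∈ (0,1) and set k = ⌈(n+1)·(1−α)⌉, and assume k ≤ n. Define ρ(ω) to be the k-th smallest value among X_0(ω), …, X_{n−1}(ω) (the k-th order statistic of the first n variables). Then P({ω : X_n(ω) ≤ ρ(ω)}) ≥ 1 − α. -/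
open MeasureTheory ENNReal

/-- The `k`-th smallest value (1-indexed `k`) among `v 0, …, v (n-1)`:
the `k`-th order statistic of the tuple `v`. Returns `0` if `k - 1` is out of
range. -/
noncomputable def orderStat (n : ℕ) (v : Fin n → ℝ) (k : ℕ) : ℝ :=
  if h : k - 1 < n then v (Tuple.sort v ⟨k - 1, h⟩) else 0

open Finset in
lemma card_filter_perm {m : ℕ} (σ : Equiv.Perm (Fin m)) (p : Fin m → Prop) [DecidablePred p] :
    (univ.filter fun j => p (σ j)).card = (univ.filter p).card := by
  apply Finset.card_bij (fun j _ => σ j)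
  · intro a ha
    simp only [mem_filter, mem_univ, true_and] at *
    exact ha
  · intro a _ b _ h
    exact σ.injective h
  · intro b hb
    simp only [mem_filter, mem_univ, true_and] at hb
    exact ⟨σ.symm b, by simp [hb], by simp⟩

open Finset in
lemma le_orderStat_iff {m k : ℕ} (hk1 : 1 ≤ k) (hkm : k ≤ m) (v : Fin m → ℝ) (t : ℝ) :
    t ≤ orderStat m v k ↔ (univ.filter fun j => v j < t).card ≤ k - 1 := by
  have h : k - 1 < m := lt_of_lt_of_le (Nat.sub_lt hk1 one_pos) hkm
  rw [orderStat, dif_pos h]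
  set σ := Tuple.sort v with hσ
  have hmono : Monotone (v ∘ σ) := Tuple.monotone_sort v
  have hcount : (univ.filter fun j => v j < t).card
      = (univ.filter fun r => v (σ r) < t).card := (card_filter_perm σ _).symm
  rw [hcount]
  constructor
  · intro ht
    calc (univ.filter fun r => v (σ r) < t).card
        ≤ (Finset.Iio (⟨k - 1, h⟩ : Fin m)).card := by
          apply Finset.card_le_card
          intro r hr
          simp only [mem_filter, mem_univ, true_and] at hr
          rw [Finset.mem_Iio]
          by_contra hc
          push_neg at hc
          exact absurd (lt_of_lt_of_le hr ht) (not_lt.2 (hmono hc))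
      _ = k - 1 := Fin.card_Iio _
  · intro hc
    by_contra ht
    push_neg at ht
    have hsub : Finset.Iic (⟨k - 1, h⟩ : Fin m) ⊆ univ.filter fun r => v (σ r) < t := by
      intro r hr
      rw [Finset.mem_Iic] at hr
      simp only [mem_filter, mem_univ, true_and]
      exact lt_of_le_of_lt (hmono hr) ht
    have hcard := Finset.card_le_card hsub
    rw [Fin.card_Iic] at hcard
    simp only [Fin.val_mk] at hcard
    omega

open Finset in
lemma count_small_rank {m k : ℕ} (hk1 : 1 ≤ k) (hkm : k ≤ m) (v : Fin m → ℝ) :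
    k ≤ (univ.filter fun i => (univ.filter fun j => v j < v i).card ≤ k - 1).card := by
  set σ := Tuple.sort v with hσ
  have hmono : Monotone (v ∘ σ) := Tuple.monotone_sort v
  have key : ∀ r : Fin m, (r : ℕ) < k →
      (univ.filter fun j => v j < v (σ r)).card ≤ k - 1 := by
    intro r hr
    have h1 : (univ.filter fun j => v j < v (σ r)).card
        = (univ.filter fun r' => v (σ r') < v (σ r)).card := (card_filter_perm σ _).symm
    rw [h1]
    calc (univ.filter fun r' => v (σ r') < v (σ r)).card ≤ (Finset.Iio r).card := by
          apply Finset.card_le_card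
          intro r' hr'
          simp only [mem_filter, mem_univ, true_and] at hr'
          rw [Finset.mem_Iio]
          by_contra hcon
          push_neg at hcon
          exact absurd hr' (not_lt.2 (hmono hcon))
      _ = (r : ℕ) := Fin.card_Iio _
      _ ≤ k - 1 := by omega
  calc k = (univ : Finset (Fin k)).card := by simp
    _ ≤ _ := by
        apply Finset.card_le_card_of_injOn (fun r : Fin k => σ (Fin.castLE hkm r))
        · intro r _
          simp only [Finset.mem_coe, mem_filter, mem_univ, true_and]
          exact key (Fin.castLE hkm r) (by simpa using r.isLt)
        · intro a _ b _ hab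
          exact Fin.castLE_injective hkm (σ.injective hab)

open Finset in
lemma card_filter_lt_last {n : ℕ} (v : Fin (n + 1) → ℝ) (t : ℝ) :
    (univ.filter fun j : Fin (n + 1) => v j < t).card
      = (univ.filter fun i : Fin n => v i.castSucc < t).card
        + (if v (Fin.last n) < t then 1 else 0) := by
  rw [Fin.univ_castSuccEmb, Finset.filter_cons]
  by_cases h : v (Fin.last n) < t
  · rw [if_pos h, if_pos h, Finset.card_cons, Finset.filter_map, Finset.card_map]
    congr 1
  · rw [if_neg h, if_neg h, Finset.filter_map, Finset.card_map]
    simp only [Nat.add_zero]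
    congr 1

open Finset in
lemma measurable_count {m : ℕ} (i : Fin m) :
    Measurable (fun v : Fin m → ℝ => (univ.filter fun j => v j < v i).card) := by
  have h : (fun v : Fin m → ℝ => (univ.filter fun j => v j < v i).card)
      = fun v => ∑ j, if v j < v i then 1 else 0 := by
    funext v
    rw [Finset.card_filter]
  rw [h]
  exact Finset.measurable_sum _ fun j _ =>
    Measurable.ite (measurableSet_lt (measurable_pi_apply j) (measurable_pi_apply i))
      measurable_const measurable_const

/-- Split conformal coverage: if `X 0, …, X n` are exchangeable real random
variables, `α ∈ (0,1)`, `k = ⌈(n+1)(1-α)⌉ ≤ n`, and `ρ ω` is the `k`-th order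
statistic of the first `n` variables (the calibration residuals), then the
future residual `X n` satisfies `P (X n ≤ ρ) ≥ 1 - α`. -/
theorem split_conformal_coverage
    {Ω : Type*} [MeasurableSpace Ω] (P : Measure Ω) [IsProbabilityMeasure P]
    (n : ℕ) (hn : 1 ≤ n)
    (X : Fin (n + 1) → Ω → ℝ) (hmeas : ∀ i, Measurable (X i))
    (hexch : ∀ σ : Equiv.Perm (Fin (n + 1)),
      Measure.map (fun ω => fun i => X (σ i) ω) P =
        Measure.map (fun ω => fun i => X i ω) P)
    (α : ℝ) (hα : α ∈ Set.Ioo (0 : ℝ) 1)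
    (k : ℕ) (hk : k = ⌈((n : ℝ) + 1) * (1 - α)⌉₊) (hkn : k ≤ n) :
    P {ω | X (Fin.last n) ω ≤
        orderStat n (fun i : Fin n => X i.castSucc ω) k} ≥
      ENNReal.ofReal (1 - α) := by
  classical
  obtain ⟨hα0, hα1⟩ := hα
  have h1α : (0 : ℝ) < 1 - α := by linarith
  have hk1 : 1 ≤ k := by
    rw [hk]
    exact Nat.ceil_pos.mpr (mul_pos (by positivity) h1α)
  set Y : Ω → (Fin (n + 1) → ℝ) := fun ω i => X i ω with hYdef
  have hYmeas : Measurable Y := measurable_pi_lambda _ hmeas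
  set μ := Measure.map Y P with hμdef
  have hμprob : IsProbabilityMeasure μ := Measure.isProbabilityMeasure_map hYmeas.aemeasurable
  set B : Fin (n + 1) → Set (Fin (n + 1) → ℝ) :=
    fun i => {v | (Finset.univ.filter fun j => v j < v i).card ≤ k - 1} with hBdef
  have hBmeas : ∀ i, MeasurableSet (B i) := fun i =>
    measurable_count i (Set.finite_Iic (k - 1)).measurableSet
  -- exchangeability: all B i have the same measure
  have hswap : ∀ i, μ (B i) = μ (B (Fin.last n)) := by
    intro i
    set σ := Equiv.swap i (Fin.last n) with hσdef
    have hg : Measurable (fun v : Fin (n + 1) → ℝ => v ∘ σ) :=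
      measurable_pi_lambda _ fun j => measurable_pi_apply (σ j)
    have hmap : Measure.map (fun v : Fin (n + 1) → ℝ => v ∘ σ) μ = μ := by
      rw [hμdef, Measure.map_map hg hYmeas]
      exact hexch σ
    have hpre : (fun v : Fin (n + 1) → ℝ => v ∘ σ) ⁻¹' (B (Fin.last n)) = B i := by
      ext v
      simp only [hBdef, Set.mem_preimage, Set.mem_setOf_eq, Function.comp]
      rw [card_filter_perm σ (fun j => v j < v (σ (Fin.last n))), Equiv.swap_apply_right]
    calc μ (B i) = μ ((fun v : Fin (n + 1) → ℝ => v ∘ σ) ⁻¹' B (Fin.last n)) := by rw [hpre]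
      _ = Measure.map (fun v : Fin (n + 1) → ℝ => v ∘ σ) μ (B (Fin.last n)) :=
          (Measure.map_apply hg (hBmeas _)).symm
      _ = μ (B (Fin.last n)) := by rw [hmap]
  -- pointwise counting bound
  have hptwise : ∀ v : Fin (n + 1) → ℝ,
      (k : ℝ≥0∞) ≤ ∑ i, (B i).indicator (1 : (Fin (n + 1) → ℝ) → ℝ≥0∞) v := by
    intro v
    have hc : ∑ i, (B i).indicator (1 : (Fin (n + 1) → ℝ) → ℝ≥0∞) v
        = ((Finset.univ.filter fun i : Fin (n + 1) =>
            (Finset.univ.filter fun j => v j < v i).card ≤ k - 1).card : ℝ≥0∞) := by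
      rw [Finset.card_filter, Nat.cast_sum]
      apply Finset.sum_congr rfl
      intro i _
      by_cases h : (Finset.univ.filter fun j => v j < v i).card ≤ k - 1
      · rw [if_pos h, Set.indicator_of_mem (by exact h : v ∈ B i)]
        simp
      · rw [if_neg h, Set.indicator_of_notMem (by exact h : v ∉ B i)]
        simp
    rw [hc]
    exact_mod_cast count_small_rank hk1 (le_trans hkn n.le_succ) v
  -- summing up
  have hsum : (k : ℝ≥0∞) ≤ ∑ i : Fin (n + 1), μ (B i) := by
    have h1 : ∑ i : Fin (n + 1), μ (B i)
        = ∫⁻ v, ∑ i, (B i).indicator (1 : (Fin (n + 1) → ℝ) → ℝ≥0∞) v ∂μ := by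
      rw [lintegral_finset_sum _ fun i _ => measurable_one.indicator (hBmeas i)]
      congr 1
      funext i
      rw [lintegral_indicator_one (hBmeas i)]
    rw [h1]
    calc (k : ℝ≥0∞) = ∫⁻ _, (k : ℝ≥0∞) ∂μ := by simp
      _ ≤ _ := lintegral_mono fun v => hptwise v
  have hconst : ∑ i : Fin (n + 1), μ (B i) = (n + 1 : ℝ≥0∞) * μ (B (Fin.last n)) := by
    rw [Finset.sum_congr rfl fun i _ => hswap i, Finset.sum_const, Finset.card_univ,
      Fintype.card_fin, nsmul_eq_mul]
    push_cast
    ring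
  rw [hconst] at hsum
  -- from (n+1) * μ(B last) ≥ k, conclude
  have hceil : ((n : ℝ) + 1) * (1 - α) ≤ (k : ℝ) := by
    rw [hk]
    exact Nat.le_ceil _
  have hkey : (n + 1 : ℝ≥0∞) * ENNReal.ofReal (1 - α) ≤ (n + 1 : ℝ≥0∞) * μ (B (Fin.last n)) := by
    refine le_trans ?_ hsum
    have h1 : (n + 1 : ℝ≥0∞) = ENNReal.ofReal ((n : ℝ) + 1) := by
      rw [ENNReal.ofReal_add (by positivity) zero_le_one]
      simp
    have h2 : (k : ℝ≥0∞) = ENNReal.ofReal (k : ℝ) := (ENNReal.ofReal_natCast k).symm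
    rw [h1, h2, ← ENNReal.ofReal_mul (by positivity)]
    exact ENNReal.ofReal_le_ofReal hceil
  have hBlast : ENNReal.ofReal (1 - α) ≤ μ (B (Fin.last n)) :=
    (ENNReal.mul_le_mul_iff_right (lt_of_lt_of_le zero_lt_one le_add_self).ne' (by simp)).mp hkey
  -- identify the event
  have hset : {ω | X (Fin.last n) ω ≤ orderStat n (fun i : Fin n => X i.castSucc ω) k}
      = Y ⁻¹' (B (Fin.last n)) := by
    ext ω
    simp only [Set.mem_setOf_eq, Set.mem_preimage, hBdef]
    rw [le_orderStat_iff hk1 hkn]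
    have hcl := card_filter_lt_last (Y ω) (X (Fin.last n) ω)
    have hne : ¬ Y ω (Fin.last n) < X (Fin.last n) ω := lt_irrefl _
    rw [if_neg hne] at hcl
    have hcl2 : (Finset.univ.filter fun j : Fin (n + 1) => Y ω j < X (Fin.last n) ω).card
        = (Finset.univ.filter fun i : Fin n => Y ω i.castSucc < X (Fin.last n) ω).card := by
      omega
    exact ⟨fun h' => hcl2.trans_le h', fun h' => hcl2.symm.trans_le h'⟩
  rw [ge_iff_le, hset, ← Measure.map_apply hYmeas (hBmeas _)]
  exact hBlast
end

section
/- Let (Ω, P) be a probability space, n_z, n_u ∈ ℕ, matrices A ∈ ℝ^{n_z × n_z} and B ∈ ℝ^{n_z × n_u}, a vector c ∈ ℝ^{n_z}, scalars d ∈ ℝ, η ∈ (0,1], ρ ≥ 0, α ∈ [0,1], fixed points z ∈ ℝ^{n_z} and u ∈ ℝ^{n_u}, and a random residual r : Ω → ℝ^{n_z} (measurable). Suppose (i) P({ω : |⟪c, r(ω)⟫| ≤ ρ}) ≥ 1 − α, (ii) ⟪c, z⟫ + d ≥ 0, and (iii) ⟪c, A·z + B·u⟫ + d ≥ (1 − η)·(⟪c,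 z⟫ + d) + ρ. Then P({ω : ⟪c, A·z + B·u + r(ω)⟫ + d ≥ 0}) ≥ 1 − α. -/
open Matrix MeasureTheory

/-- High-probability one-step safety: if the projected residual is covered
with probability at least `1 - α`, the current lifted state is safe, and the
robust Koopman-CBF condition holds, then the true next lifted state is safe
with probability at least `1 - α`. -/
theorem robust_koopman_cbf_high_probability_safety
    {Ω : Type*} [MeasurableSpace Ω] (P : Measure Ω) [IsProbabilityMeasure P]
    (nz nu : ℕ)
    (A : Matrix (Fin nz) (Fin nz) ℝ) (B : Matrix (Fin nz) (Fin nu) ℝ)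
    (c : Fin nz → ℝ) (d η ρ α : ℝ)
    (hη : η ∈ Set.Ioc (0 : ℝ) 1) (hρ : 0 ≤ ρ) (hα : α ∈ Set.Icc (0 : ℝ) 1)
    (z : Fin nz → ℝ) (u : Fin nu → ℝ)
    (r : Ω → Fin nz → ℝ) (hr : Measurable r)
    (hcov : P {ω | |c ⬝ᵥ r ω| ≤ ρ} ≥ ENNReal.ofReal (1 - α))
    (hsafe : c ⬝ᵥ z + d ≥ 0)
    (hrob : c ⬝ᵥ (A.mulVec z + B.mulVec u) + d ≥ (1 - η) * (c ⬝ᵥ z + d) + ρ) :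
    P {ω | c ⬝ᵥ (A.mulVec z + B.mulVec u + r ω) + d ≥ 0} ≥
      ENNReal.ofReal (1 - α) := by
  refine le_trans hcov (measure_mono ?_)
  intro ω hω
  simp only [Set.mem_setOf_eq] at *
  have h1 : (1 - η) * (c ⬝ᵥ z + d) ≥ 0 :=
    mul_nonneg (by linarith [hη.2]) hsafe
  have h2 := abs_le.mp hω
  rw [dotProduct_add]
  linarith
end
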